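/- Let m ≥ 3 and let r be the unique real root with r > 1 of λ^{m-1} - λ^{m-2} - ... - λ - 1. For each k let ξ_k = Σ_{i=0}^{k} S_i, where S_i is the number of compositions of i into parts from {1, 2, ..., m-1}. Then ξ_k ~ r^{k+1}/(m·r - 2(m-1)) as k → ∞; that is, the sequence ξ_k · (m·r - 2(m-1)) / r^{k+1} tends to 1 as k → ∞. -/

import Mathlib

open Finset Filter


abbrev Tt (m i : ℕ) := {l : List ℕ // (∀ x ∈ l, 1 ≤ x ∧ x ≤ m - 1) ∧ l.sum = i}

instance Tt_unique (m : ℕ) : Unique (Tt m 0) where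
  default := ⟨[], by simp⟩
  uniq := by
    rintro ⟨l, hl, hs⟩
    have : ∀ x ∈ l, x = 0 := List.sum_eq_zero_iff.mp hs
    have : l = [] := by
      cases l with
      | nil => rfl
      | cons a t =>
        have h1 := (hl a (by simp)).1
        have h2 := this a (by simp)
        omega
    subst this; rfl

def combEquiv (m : ℕ) (hm : 3 ≤ m) (i : ℕ) :
    Tt m (i + 1) ≃ Σ j : ((Finset.range (m - 1)).filter (· ≤ i) : Finset ℕ), Tt m (i - j) where
  toFun := fun ⟨l, hl⟩ =>
    match l, hl with
    | [], h => absurd h.2 (by simp)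
    | (a :: t), h =>
      ⟨⟨a - 1, by
        have h1 := (h.1 a (by simp)).1
        have h2 := (h.1 a (by simp)).2
        have h3 : a + t.sum = i + 1 := by simpa using h.2
        simp only [mem_filter, mem_range]
        omega⟩,
       ⟨t, ⟨fun x hx => h.1 x (by simp [hx]), by
        have h1 := (h.1 a (by simp)).1
        have h3 : a + t.sum = i + 1 := by simpa using h.2
        show t.sum = i - (a - 1)
        omega⟩⟩⟩
  invFun := fun ⟨⟨j, hj⟩, ⟨l, hl⟩⟩ =>
    ⟨(j + 1) :: l, by
      simp only [mem_filter, mem_range] at hj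
      refine ⟨?_, ?_⟩
      · intro x hx
        rcases List.mem_cons.mp hx with h | h
        · subst h; omega
        · exact hl.1 x h
      · simp only [List.sum_cons, hl.2]; omega⟩
  left_inv := by
    rintro ⟨l, hl⟩
    match l, hl with
    | [], h => exact absurd h.2 (by simp)
    | (a :: t), h =>
      apply Subtype.ext
      have h1 := (h.1 a (by simp)).1
      simp only []
      congr 1
      omega
  right_inv := by
    rintro ⟨⟨j, hj⟩, ⟨l, hl⟩⟩
    rfl

theorem Tt_finite (m : ℕ) (hm : 3 ≤ m) : ∀ i, Finite (Tt m i) := by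
  intro i
  induction i using Nat.strong_induction_on with
  | _ i ih =>
    cases i with
    | zero => infer_instance
    | succ n =>
      have : ∀ j : ((Finset.range (m - 1)).filter (· ≤ n) : Finset ℕ), Finite (Tt m (n - j)) := by
        rintro ⟨j, hj⟩
        exact ih _ (by omega)
      exact Finite.of_equiv _ (combEquiv m hm n).symm

theorem S_rec (m : ℕ) (hm : 3 ≤ m)
    (S : ℕ → ℕ)
    (hS : ∀ i : ℕ, S i = Nat.card {l : List ℕ // (∀ x ∈ l, 1 ≤ x ∧ x ≤ m - 1) ∧ l.sum = i}) :
    S 0 = 1 ∧ ∀ i, S (i + 1) = ∑ j ∈ Finset.range (m - 1), if j ≤ i then S (i - j) else 0 := by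
  have hfin := Tt_finite m hm
  constructor
  · rw [hS]; exact Nat.card_unique
  · intro i
    rw [hS, Nat.card_congr (combEquiv m hm i)]
    have : ∀ j, Finite (Tt m j) := hfin
    have := fun (j : ((Finset.range (m - 1)).filter (· ≤ i) : Finset ℕ)) =>
      Fintype.ofFinite (Tt m (i - j))
    rw [Nat.card_eq_fintype_card, Fintype.card_sigma]
    simp_rw [← Nat.card_eq_fintype_card]
    rw [Finset.sum_coe_sort ((Finset.range (m - 1)).filter (· ≤ i))
      (fun j => Nat.card (Tt m (i - j)))]
    rw [Finset.sum_filter]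
    refine Finset.sum_congr rfl fun j _ => ?_
    split <;> simp [hS]

section Alg
variable (m : ℕ) (hm : 3 ≤ m) (r : ℝ) (hr : 1 < r)
  (hroot : r ^ (m - 1) - ∑ i ∈ Finset.range (m - 1), r ^ i = 0)

include hm hr hroot

theorem A1 : ∑ j ∈ Finset.range (m - 1), r⁻¹ ^ (j + 1) = 1 := by
  have hr0 : r ≠ 0 := by positivity
  have hE : ∑ i ∈ range (m - 1), r ^ i = r ^ (m - 1) := by
    have := sub_eq_zero.mp hroot; linarith
  have key : ∀ j ∈ range (m - 1), r⁻¹ ^ (j + 1) = r ^ (m - 2 - j) / r ^ (m - 1) := by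
    intro j hj
    simp only [mem_range] at hj
    have hpow : r ^ (m - 2 - j) * r ^ (j + 1) = r ^ (m - 1) := by
      rw [← pow_add]; congr 1; omega
    rw [inv_pow, inv_eq_one_div, div_eq_div_iff (pow_ne_zero _ hr0) (pow_ne_zero _ hr0)]
    linarith [hpow]
  rw [Finset.sum_congr rfl key, ← Finset.sum_div]
  have : ∑ j ∈ range (m - 1), r ^ (m - 2 - j) = ∑ j ∈ range (m - 1), r ^ j := by
    rw [← Finset.sum_range_reflect]
    apply Finset.sum_congr rfl
    intro j hj
    simp only [mem_range] at hj
    congr 1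
    omega
  rw [this, hE, div_self (pow_ne_zero _ hr0)]

theorem A2 : r⁻¹ ^ (m - 1) = 2 - r := by
  have hr0 : r ≠ 0 := by positivity
  have hE : ∑ i ∈ range (m - 1), r ^ i = r ^ (m - 1) := by
    have := sub_eq_zero.mp hroot; linarith
  have hm1 : m - 1 + 1 = m := by omega
  have h1 : r ^ m = ∑ i ∈ range (m - 1), r ^ (i + 1) := by
    rw [← hm1, pow_succ, ← hE, Finset.sum_mul]
    exact Finset.sum_congr rfl fun i _ => (pow_succ r i).symm
  have h2 : ∑ i ∈ range m, r ^ i = (∑ i ∈ range (m - 1), r ^ (i + 1)) + 1 := by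
    rw [← hm1, Finset.sum_range_succ' (fun i => r ^ i) (m - 1)]
    norm_num
  have h3 : ∑ i ∈ range m, r ^ i = 2 * r ^ (m - 1) := by
    have hs := Finset.sum_range_succ (fun i => r ^ i) (m - 1)
    rw [hm1] at hs
    rw [hs, hE]; ring
  have hpm : r ^ m = 2 * r ^ (m - 1) - 1 := by linarith
  have hmul : (2 - r) * r ^ (m - 1) = 1 := by
    have : r * r ^ (m - 1) = r ^ m := by rw [← pow_succ', hm1]
    nlinarith [hpm]
  rw [inv_pow]
  exact (eq_inv_of_mul_eq_one_left hmul).symm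

theorem A3 : ∀ j ∈ Finset.range (m - 1),
    (1 - r⁻¹) * ∑ l ∈ Finset.Icc (j + 1) (m - 1), r⁻¹ ^ l = r⁻¹ ^ (j + 1) - r⁻¹ ^ m := by
  intro j hj
  simp only [mem_range] at hj
  set x := r⁻¹ with hx
  rw [Finset.mul_sum]
  have step : ∀ l, (1 - x) * x ^ l = x ^ l - x ^ (l + 1) := by intro l; ring
  rw [Finset.sum_congr rfl fun l _ => step l]
  have hicc : Finset.Icc (j + 1) (m - 1) = Finset.Ico (j + 1) m := by
    ext l; simp only [mem_Icc, mem_Ico]; omega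
  rw [hicc, Finset.sum_Ico_eq_sum_range]
  have hn : m - (j + 1) = m - 1 - j := by omega
  rw [hn]
  have := Finset.sum_range_sub' (fun i => x ^ (j + 1 + i)) (m - 1 - j)
  calc ∑ i ∈ range (m - 1 - j), (x ^ (j + 1 + i) - x ^ (j + 1 + i + 1))
      = x ^ (j + 1 + 0) - x ^ (j + 1 + (m - 1 - j)) := this
    _ = x ^ (j + 1) - x ^ m := by congr 2 <;> omega

theorem A4 :
    (∑ j ∈ Finset.range (m - 1), ∑ l ∈ Finset.Icc (j + 1) (m - 1), r⁻¹ ^ l) * (r - 1)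
      = (m : ℝ) * r - 2 * ((m : ℝ) - 1) := by
  have hr0 : r ≠ 0 := by positivity
  set μ := ∑ j ∈ Finset.range (m - 1), ∑ l ∈ Finset.Icc (j + 1) (m - 1), r⁻¹ ^ l with hμ
  have h5 : (1 - r⁻¹) * μ = 1 - ((m : ℝ) - 1) * r⁻¹ ^ m := by
    rw [hμ, Finset.mul_sum, Finset.sum_congr rfl (A3 m hm r hr hroot), Finset.sum_sub_distrib,
      A1 m hm r hr hroot, Finset.sum_const, Finset.card_range, nsmul_eq_mul,
      Nat.cast_sub (by omega : 1 ≤ m), Nat.cast_one]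
  have h6 : μ * (r - 1) = r * ((1 - r⁻¹) * μ) := by field_simp
  have h7 : r * r⁻¹ ^ m = r⁻¹ ^ (m - 1) := by
    have hm1 : m - 1 + 1 = m := by omega
    rw [← hm1, pow_succ]
    field_simp
    ring_nf; congr 1; omega
  rw [h6, h5, mul_sub, mul_one, ← mul_assoc, mul_comm r ((m:ℝ) - 1), mul_assoc, h7,
    A2 m hm r hr hroot]
  ring

end Alg

def Wnd (v : ℕ → ℝ) (n j : ℕ) : ℝ := if j ≤ n then v (n - j) else 0

theorem Wnd_zero (v : ℕ → ℝ) (n : ℕ) : Wnd v n 0 = v n := by simp [Wnd]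

theorem Wnd_succ (v : ℕ → ℝ) (n j : ℕ) : Wnd v (n + 1) (j + 1) = Wnd v n j := by
  simp only [Wnd, Nat.succ_sub_succ, Nat.succ_le_succ_iff]

noncomputable def bb (e : ℕ) (he : 2 ≤ e) (v : ℕ → ℝ) (n : ℕ) : ℝ :=
  (Finset.range e).sup' (Finset.nonempty_range_iff.mpr (by omega)) (Wnd v n)

noncomputable def aa (e : ℕ) (he : 2 ≤ e) (v : ℕ → ℝ) (n : ℕ) : ℝ :=
  (Finset.range e).inf' (Finset.nonempty_range_iff.mpr (by omega)) (Wnd v n)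

section Win

variable (e : ℕ) (he : 2 ≤ e) (x : ℝ) (hx0 : 0 < x) (hx1 : x < 1)
  (v : ℕ → ℝ)
  (hpsum : ∑ j ∈ Finset.range e, x ^ (j + 1) = 1)
  (hvrec : ∀ n, v (n + 1) = ∑ j ∈ Finset.range e, x ^ (j + 1) * Wnd v n j)

theorem aa_le_bb (n : ℕ) : aa e he v n ≤ bb e he v n :=
  le_trans (Finset.inf'_le _ (by simp; omega : (0:ℕ) ∈ Finset.range e))
    (Finset.le_sup' _ (by simp; omega : (0:ℕ) ∈ Finset.range e))

theorem aa_le_v (n : ℕ) : aa e he v n ≤ v n := by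
  have := Finset.inf'_le (f := Wnd v n)
    (b := (0:ℕ)) (by simp; omega : (0:ℕ) ∈ Finset.range e)
  rwa [Wnd_zero] at this

theorem v_le_bb (n : ℕ) : v n ≤ bb e he v n := by
  have := Finset.le_sup' (f := Wnd v n)
    (b := (0:ℕ)) (by simp; omega : (0:ℕ) ∈ Finset.range e)
  rwa [Wnd_zero] at this

include hx0 hpsum hvrec

theorem vsucc_le_bb (n : ℕ) : v (n + 1) ≤ bb e he v n := by
  rw [hvrec n]
  calc ∑ j ∈ Finset.range e, x ^ (j + 1) * Wnd v n j
      ≤ ∑ j ∈ Finset.range e, x ^ (j + 1) * bb e he v n := by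
        refine Finset.sum_le_sum fun j hj => ?_
        exact mul_le_mul_of_nonneg_left (Finset.le_sup' _ hj) (by positivity)
    _ = bb e he v n := by rw [← Finset.sum_mul, hpsum, one_mul]

theorem aa_le_vsucc (n : ℕ) : aa e he v n ≤ v (n + 1) := by
  rw [hvrec n]
  calc aa e he v n = ∑ j ∈ Finset.range e, x ^ (j + 1) * aa e he v n := by
        rw [← Finset.sum_mul, hpsum, one_mul]
    _ ≤ ∑ j ∈ Finset.range e, x ^ (j + 1) * Wnd v n j := by
        refine Finset.sum_le_sum fun j hj => ?_
        exact mul_le_mul_of_nonneg_left (Finset.inf'_le _ hj) (by positivity)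

theorem bb_anti : Antitone (bb e he v) := by
  refine antitone_nat_of_succ_le fun n => ?_
  refine Finset.sup'_le _ _ fun j hj => ?_
  cases j with
  | zero => rw [Wnd_zero]; exact vsucc_le_bb e he x hx0 v hpsum hvrec n
  | succ j' =>
    rw [Wnd_succ]
    exact Finset.le_sup' _ (by simp at hj ⊢; omega)

theorem aa_mono : Monotone (aa e he v) := by
  refine monotone_nat_of_le_succ fun n => ?_
  refine Finset.le_inf' _ _ fun j hj => ?_
  cases j with
  | zero => rw [Wnd_zero]; exact aa_le_vsucc e he x hx0 v hpsum hvrec n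
  | succ j' =>
    rw [Wnd_succ]
    exact Finset.inf'_le _ (by simp at hj ⊢; omega)

include hx1 in
theorem contr (n : ℕ) (t : ℝ) (j0 : ℕ) (hj0 : j0 ∈ Finset.range e)
    (hw : Wnd v n j0 ≤ t) (htb : t ≤ bb e he v n) :
    v (n + 1) ≤ bb e he v n - x ^ e * (bb e he v n - t) := by
  rw [hvrec n]
  have h1 : ∑ j ∈ Finset.range e, x ^ (j + 1) * Wnd v n j
      ≤ ∑ j ∈ Finset.range e, x ^ (j + 1) * (bb e he v n + if j = j0 then t - bb e he v n else 0) := by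
    refine Finset.sum_le_sum fun j hj => ?_
    refine mul_le_mul_of_nonneg_left ?_ (by positivity)
    rcases eq_or_ne j j0 with h | h
    · subst h; rw [if_pos rfl]; linarith
    · rw [if_neg h, add_zero]; exact Finset.le_sup' _ hj
  have h2 : ∑ j ∈ Finset.range e, x ^ (j + 1) * (bb e he v n + if j = j0 then t - bb e he v n else 0)
      = bb e he v n + x ^ (j0 + 1) * (t - bb e he v n) := by
    simp only [mul_add, mul_ite, mul_zero]
    rw [Finset.sum_add_distrib, ← Finset.sum_mul, hpsum, one_mul,
      Finset.sum_ite_eq' (Finset.range e) j0 (fun j => x ^ (j + 1) * (t - bb e he v n)),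
      if_pos hj0]
  have h3 : x ^ e ≤ x ^ (j0 + 1) := by
    apply pow_le_pow_of_le_one hx0.le hx1.le
    simp only [Finset.mem_range] at hj0; omega
  have h4 : x ^ e * (bb e he v n - t) ≤ x ^ (j0 + 1) * (bb e he v n - t) :=
    mul_le_mul_of_nonneg_right h3 (by linarith)
  linarith [h1, h2]

include hx1 in
theorem step_all (n t : ℕ) (ht1 : 1 ≤ t) (hte : t ≤ e) :
    v (n + t) ≤ bb e he v n - (x ^ e * x ^ e) * (bb e he v n - aa e he v n) := by
  have hxe0 : 0 < x ^ e := by positivity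
  have hxe1 : x ^ e ≤ 1 := pow_le_one₀ hx0.le hx1.le
  have hosc : 0 ≤ bb e he v n - aa e he v n := by
    have := aa_le_bb e he v n; linarith
  obtain ⟨j0, hj0, hinf⟩ := Finset.exists_mem_eq_inf'
    (Finset.nonempty_range_iff.mpr (by omega : e ≠ 0)) (Wnd v n)
  have hv1 : v (n + 1) ≤ bb e he v n - x ^ e * (bb e he v n - aa e he v n) := by
    exact contr e he x hx0 hx1 v hpsum hvrec n (aa e he v n) j0 hj0
      (le_of_eq (show Wnd v n j0 = aa e he v n from hinf.symm)) (aa_le_bb e he v n)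
  rcases Nat.lt_or_ge t 2 with h2 | h2
  · have : t = 1 := by omega
    subst this
    have hkey : x ^ e * x ^ e * (bb e he v n - aa e he v n)
        ≤ x ^ e * (bb e he v n - aa e he v n) := by
      nlinarith [mul_nonneg (sub_nonneg.mpr hxe1) (mul_nonneg hxe0.le hosc)]
    linarith
  · -- t = s + 2
    obtain ⟨s, rfl⟩ : ∃ s, t = s + 2 := ⟨t - 2, by omega⟩
    set B1 := bb e he v n - x ^ e * (bb e he v n - aa e he v n) with hB1
    have hsmem : s ∈ Finset.range e := by simp; omega
    have hWs : Wnd v (n + s + 1) s = v (n + 1) := by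
      simp only [Wnd, if_pos (by omega : s ≤ n + s + 1)]
      congr 1; omega
    have hbmono : bb e he v (n + s + 1) ≤ bb e he v n :=
      bb_anti e he x hx0 v hpsum hvrec (by omega : n ≤ n + s + 1)
    have hnt : n + (s + 2) = (n + s + 1) + 1 := by omega
    rw [hnt]
    by_cases hB : B1 ≤ bb e he v (n + s + 1)
    · have hc := contr e he x hx0 hx1 v hpsum hvrec (n + s + 1) B1 s hsmem
        (by rw [hWs]; exact hv1) hB
      nlinarith [hc, hbmono, hosc, hxe0.le, hxe1]
    · push_neg at hB
      have := vsucc_le_bb e he x hx0 v hpsum hvrec (n + s + 1)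
      nlinarith [hosc, hxe0.le, hxe1]

include hx1 in
theorem osc_contr (n : ℕ) :
    bb e he v (n + e) - aa e he v (n + e)
      ≤ (1 - x ^ e * x ^ e) * (bb e he v n - aa e he v n) := by
  have ha : aa e he v n ≤ aa e he v (n + e) :=
    aa_mono e he x hx0 v hpsum hvrec (by omega)
  have hb : bb e he v (n + e) ≤ bb e he v n - (x ^ e * x ^ e) * (bb e he v n - aa e he v n) := by
    refine Finset.sup'_le _ _ fun j hj => ?_
    simp only [Finset.mem_range] at hj
    have hWj : Wnd v (n + e) j = v (n + (e - j)) := by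
      simp only [Wnd, if_pos (by omega : j ≤ n + e)]
      congr 1; omega
    rw [hWj]
    exact step_all e he x hx0 hx1 v hpsum hvrec n (e - j) (by omega) (by omega)
  linarith

include hx1 in
theorem window_main : ∃ L : ℝ, Tendsto v atTop (nhds L) ∧
    (∀ n, |v n - L| ≤ bb e he v 0 - aa e he v 0) := by
  set q := x ^ e * x ^ e with hq
  have hq0 : 0 < q := by positivity
  have hq1 : q ≤ 1 := by
    have : x ^ e ≤ 1 := pow_le_one₀ hx0.le hx1.le
    nlinarith [pow_pos hx0 e]
  have hbanti := bb_anti e he x hx0 v hpsum hvrec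
  have hamono := aa_mono e he x hx0 v hpsum hvrec
  have hab : ∀ n, aa e he v n ≤ bb e he v n := aa_le_bb e he v
  have hbbdd : ∀ n, aa e he v 0 ≤ bb e he v n :=
    fun n => le_trans (hamono (Nat.zero_le n)) (hab n)
  have habdd : ∀ n, aa e he v n ≤ bb e he v 0 :=
    fun n => le_trans (hab n) (hbanti (Nat.zero_le n))
  -- limits of bb and aa
  have hbt : Tendsto (bb e he v) atTop (nhds (⨅ n, bb e he v n)) :=
    tendsto_atTop_ciInf hbanti ⟨aa e he v 0, fun y hy => by
      obtain ⟨n, rfl⟩ := hy; exact hbbdd n⟩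
  have hat : Tendsto (aa e he v) atTop (nhds (⨆ n, aa e he v n)) :=
    tendsto_atTop_ciSup hamono ⟨bb e he v 0, fun y hy => by
      obtain ⟨n, rfl⟩ := hy; exact habdd n⟩
  set L := ⨅ n, bb e he v n with hL
  set L' := ⨆ n, aa e he v n with hL'
  -- oscillation tends to zero along multiples of e
  have hosc_sub : ∀ k : ℕ, bb e he v (k * e) - aa e he v (k * e)
      ≤ (1 - q) ^ k * (bb e he v 0 - aa e he v 0) := by
    intro k
    induction k with
    | zero => simp
    | succ k ih =>
      have : (k + 1) * e = k * e + e := by ring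
      rw [this]
      have hstep := osc_contr e he x hx0 hx1 v hpsum hvrec (k * e)
      have h1q : (0:ℝ) ≤ 1 - q := by linarith
      calc bb e he v (k * e + e) - aa e he v (k * e + e)
          ≤ (1 - q) * (bb e he v (k * e) - aa e he v (k * e)) := hstep
        _ ≤ (1 - q) * ((1 - q) ^ k * (bb e he v 0 - aa e he v 0)) :=
            mul_le_mul_of_nonneg_left ih h1q
        _ = (1 - q) ^ (k + 1) * (bb e he v 0 - aa e he v 0) := by ring
  have hgeo : Tendsto (fun k : ℕ => (1 - q) ^ k * (bb e he v 0 - aa e he v 0)) atTop (nhds 0) := by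
    have := tendsto_pow_atTop_nhds_zero_of_lt_one (by linarith : (0:ℝ) ≤ 1 - q) (by linarith : 1 - q < 1)
    simpa using this.mul_const (bb e he v 0 - aa e he v 0)
  have hsubseq : Tendsto (fun k : ℕ => bb e he v (k * e) - aa e he v (k * e)) atTop (nhds 0) := by
    refine squeeze_zero (fun k => by have := hab (k * e); linarith) hosc_sub hgeo
  have hmul_tendsto : Tendsto (fun k : ℕ => k * e) atTop atTop :=
    tendsto_atTop_mono (fun k => Nat.le_mul_of_pos_right k (by omega)) tendsto_id
  have hdiff : Tendsto (fun n => bb e he v n - aa e he v n) atTop (nhds (L - L')) :=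
    hbt.sub hat
  have hLL' : L - L' = 0 :=
    tendsto_nhds_unique (hdiff.comp hmul_tendsto) hsubseq
  have hLeq : L' = L := by linarith [hLL']
  refine ⟨L, ?_, ?_⟩
  · have h1 : ∀ n, aa e he v n ≤ v n := aa_le_v e he v
    have h2 : ∀ n, v n ≤ bb e he v n := v_le_bb e he v
    refine tendsto_of_tendsto_of_tendsto_of_le_of_le (hLeq ▸ hat) hbt h1 h2
  · intro n
    have h1 : aa e he v 0 ≤ v n := le_trans (hamono (Nat.zero_le n)) (aa_le_v e he v n)
    have h2 : v n ≤ bb e he v 0 := le_trans (v_le_bb e he v n) (hbanti (Nat.zero_le n))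
    have hL1 : aa e he v 0 ≤ L := by
      have : aa e he v 0 ≤ L' := le_ciSup ⟨bb e he v 0, fun y hy => by
        obtain ⟨n, rfl⟩ := hy; exact habdd n⟩ 0
      linarith
    have hL2 : L ≤ bb e he v 0 := ciInf_le ⟨aa e he v 0, fun y hy => by
      obtain ⟨n, rfl⟩ := hy; exact hbbdd n⟩ 0
    rw [abs_le]; constructor <;> linarith

end Win


section Cons

variable (e : ℕ) (he : 2 ≤ e) (x : ℝ)
  (v : ℕ → ℝ)
  (hpsum : ∑ j ∈ Finset.range e, x ^ (j + 1) = 1)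
  (hvrec : ∀ n, v (n + 1) = ∑ j ∈ Finset.range e, x ^ (j + 1) * Wnd v n j)

include he hpsum hvrec

theorem conserved (hv0 : v 0 = 1) (L : ℝ) (hvt : Tendsto v atTop (nhds L)) :
    (∑ j ∈ Finset.range e, ∑ l ∈ Finset.Icc (j + 1) e, x ^ l) * L = 1 := by
  set C : ℕ → ℝ := fun j => ∑ l ∈ Finset.Icc (j + 1) e, x ^ l with hC
  have he1 : e - 1 + 1 = e := by omega
  have hC0 : C 0 = 1 := by
    rw [hC]
    simp only
    have : Finset.Icc (0 + 1) e = Finset.Ico 1 (e + 1) := by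
      ext l; simp only [mem_Icc, mem_Ico]; omega
    rw [this, Finset.sum_Ico_eq_sum_range]
    simp only [Nat.add_sub_cancel]
    rw [← hpsum]
    exact Finset.sum_congr rfl fun i _ => by rw [Nat.add_comm]
  have hCstep : ∀ j, j < e → C j = x ^ (j + 1) + C (j + 1) := by
    intro j hj
    have hins : Finset.Icc (j + 1) e = insert (j + 1) (Finset.Icc (j + 2) e) := by
      ext l; simp only [mem_Icc, Finset.mem_insert]; omega
    simp only [hC]
    rw [hins, Finset.sum_insert (by simp)]
  have hCe : C e = 0 := by
    simp only [hC]
    rw [Finset.Icc_eq_empty (by omega), Finset.sum_empty]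
  set H : ℕ → ℝ := fun n => ∑ j ∈ Finset.range e, C j * Wnd v n j with hH
  have hWz : ∀ n, Wnd v n 0 = v n := fun n => by simp [Wnd]
  have hWs : ∀ n j, Wnd v (n + 1) (j + 1) = Wnd v n j := fun n j => by
    simp only [Wnd, Nat.succ_sub_succ, Nat.succ_le_succ_iff]
  have hHsucc : ∀ n, H (n + 1) = H n := by
    intro n
    have lhs : H (n + 1)
        = (∑ j ∈ Finset.range (e - 1), C (j + 1) * Wnd v n j) + v (n + 1) := by
      simp only [hH]
      rw [← he1, Finset.sum_range_succ' (fun j => C j * Wnd v ((n + 1)) j) (e - 1)]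
      rw [hWz, hC0, one_mul]
      congr 1
      exact Finset.sum_congr rfl fun j _ => by rw [hWs]
    have rhs : H n
        = (∑ j ∈ Finset.range (e - 1), C (j + 1) * Wnd v n j) + v (n + 1) := by
      simp only [hH]
      have : ∀ j ∈ Finset.range e, C j * Wnd v n j
          = x ^ (j + 1) * Wnd v n j + C (j + 1) * Wnd v n j := by
        intro j hj
        simp only [mem_range] at hj
        rw [hCstep j hj, add_mul]
      rw [Finset.sum_congr rfl this, Finset.sum_add_distrib, ← hvrec n]
      have : ∑ j ∈ Finset.range e, C (j + 1) * Wnd v n j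
          = ∑ j ∈ Finset.range (e - 1), C (j + 1) * Wnd v n j := by
        rw [← he1, Finset.sum_range_succ, he1, hCe, zero_mul, add_zero]
      rw [this]
      ring
    rw [lhs, rhs]
  have hHone : ∀ n, H n = 1 := by
    intro n
    induction n with
    | zero =>
      simp only [hH]
      rw [← he1, Finset.sum_range_succ' (fun j => C j * Wnd v 0 j) (e - 1)]
      have hz : ∀ j, Wnd v 0 (j + 1) = 0 := fun j => by simp [Wnd]
      rw [hWz, hv0, hC0, one_mul]
      rw [Finset.sum_congr rfl fun j _ => by rw [hz, mul_zero]]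
      simp
    | succ n ih => rw [hHsucc n, ih]
  have hHt : Tendsto H atTop (nhds ((∑ j ∈ Finset.range e, C j) * L)) := by
    rw [Finset.sum_mul]
    apply tendsto_finset_sum
    intro j _
    have h1 : Tendsto (fun n => v (n - j)) atTop (nhds L) :=
      hvt.comp (tendsto_sub_atTop_nat j)
    have h2 : (fun n => v (n - j)) =ᶠ[atTop] (fun n => Wnd v n j) := by
      filter_upwards [eventually_ge_atTop j] with n hn
      simp [Wnd, hn]
    exact ((h1.congr' h2).const_mul (C j))
  have : Tendsto H atTop (nhds 1) := by
    rw [show H = fun _ => (1:ℝ) from funext hHone]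
    exact tendsto_const_nhds
  exact (tendsto_nhds_unique hHt this)

end Cons

theorem sum_geom_weight (x : ℝ) (hx0 : 0 < x) (hx1 : x < 1) (v : ℕ → ℝ) (L C : ℝ)
    (hb : ∀ n, |v n - L| ≤ C) (hv : Filter.Tendsto v Filter.atTop (nhds L)) :
    Filter.Tendsto (fun k => ∑ i ∈ Finset.range (k + 1), v i * x ^ (k + 1 - i))
      Filter.atTop (nhds (L * (x / (1 - x)))) := by
  have hx1' : (0:ℝ) < 1 - x := by linarith
  have hC0 : 0 ≤ C := le_trans (abs_nonneg _) (hb 0)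
  have hsum_pow : ∀ n : ℕ, ∑ t ∈ Finset.range n, x ^ (t + 1) ≤ x * (1 - x)⁻¹ := by
    intro n
    have h1 : ∑ t ∈ Finset.range n, x ^ (t + 1) = x * ∑ t ∈ Finset.range n, x ^ t := by
      rw [Finset.mul_sum]; exact Finset.sum_congr rfl fun t _ => by ring
    rw [h1]
    refine mul_le_mul_of_nonneg_left ?_ hx0.le
    rw [geom_sum_eq (by linarith : x ≠ 1) n, div_le_iff_of_neg (by linarith : x - 1 < 0)]
    have : (1 - x)⁻¹ * (x - 1) = -1 := by field_simp; ring
    rw [this]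
    nlinarith [pow_nonneg hx0.le n]
  have hsplit : ∀ k : ℕ, ∑ i ∈ Finset.range (k + 1), v i * x ^ (k + 1 - i)
      = L * ∑ t ∈ Finset.range (k + 1), x ^ (t + 1)
        + ∑ i ∈ Finset.range (k + 1), (v i - L) * x ^ (k + 1 - i) := by
    intro k
    have h1 : ∑ t ∈ Finset.range (k + 1), x ^ (t + 1)
        = ∑ i ∈ Finset.range (k + 1), x ^ (k + 1 - i) := by
      rw [← Finset.sum_range_reflect (fun t => x ^ (t + 1)) (k + 1)]
      exact Finset.sum_congr rfl fun i hi => by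
        simp only [mem_range] at hi; congr 1; omega
    rw [h1, Finset.mul_sum, ← Finset.sum_add_distrib]
    exact Finset.sum_congr rfl fun i _ => by ring
  have hgeo : Tendsto (fun k : ℕ => L * ∑ t ∈ Finset.range (k + 1), x ^ (t + 1))
      atTop (nhds (L * (x / (1 - x)))) := by
    have h0 : Tendsto (fun n : ℕ => ∑ t ∈ Finset.range n, x ^ t) atTop (nhds (1 - x)⁻¹) :=
      (hasSum_geometric_of_lt_one hx0.le hx1).tendsto_sum_nat
    have h1 : Tendsto (fun k : ℕ => ∑ t ∈ Finset.range (k + 1), x ^ t)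
        atTop (nhds (1 - x)⁻¹) := h0.comp (tendsto_add_atTop_nat 1)
    have h2 : (fun k : ℕ => L * ∑ t ∈ Finset.range (k + 1), x ^ (t + 1))
        = fun k : ℕ => L * x * ∑ t ∈ Finset.range (k + 1), x ^ t := by
      funext k
      rw [Finset.mul_sum, Finset.mul_sum]
      exact Finset.sum_congr rfl fun t _ => by ring
    rw [h2, show L * (x / (1 - x)) = L * x * (1 - x)⁻¹ by rw [div_eq_mul_inv]; ring]
    exact h1.const_mul (L * x)
  have hzero : Tendsto (fun k : ℕ => ∑ i ∈ Finset.range (k + 1), (v i - L) * x ^ (k + 1 - i))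
      atTop (nhds 0) := by
    rw [Metric.tendsto_atTop]
    intro ε hε
    set δ := ε * (1 - x) / (2 * x) with hδdef
    have hδ : 0 < δ := by positivity
    obtain ⟨N, hN⟩ := (Metric.tendsto_atTop.mp hv) δ hδ
    set ε2 := ε / (2 * ((N : ℝ) * C + 1)) with hε2def
    have hε2 : 0 < ε2 := by positivity
    obtain ⟨K, hK⟩ := (Metric.tendsto_atTop.mp
      (tendsto_pow_atTop_nhds_zero_of_lt_one hx0.le hx1)) ε2 hε2
    refine ⟨N + K, fun k hk => ?_⟩
    rw [Real.dist_eq, sub_zero]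
    have habs : |∑ i ∈ Finset.range (k + 1), (v i - L) * x ^ (k + 1 - i)|
        ≤ ∑ i ∈ Finset.range (k + 1), |v i - L| * x ^ (k + 1 - i) := by
      refine le_trans (Finset.abs_sum_le_sum_abs _ _) (le_of_eq ?_)
      exact Finset.sum_congr rfl fun i _ => by
        rw [abs_mul, abs_of_pos (pow_pos hx0 _)]
    have hsplit2 : ∑ i ∈ Finset.range (k + 1), |v i - L| * x ^ (k + 1 - i)
        = ∑ i ∈ Finset.Ico 0 N, |v i - L| * x ^ (k + 1 - i)
          + ∑ i ∈ Finset.Ico N (k + 1), |v i - L| * x ^ (k + 1 - i) := by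
      rw [Finset.range_eq_Ico, ← Finset.sum_Ico_consecutive _ (Nat.zero_le N) (by omega)]
    have hpart1 : ∑ i ∈ Finset.Ico 0 N, |v i - L| * x ^ (k + 1 - i)
        ≤ (N : ℝ) * (C * x ^ (k + 1 - N)) := by
      have : ∀ i ∈ Finset.Ico 0 N, |v i - L| * x ^ (k + 1 - i) ≤ C * x ^ (k + 1 - N) := by
        intro i hi
        simp only [Finset.mem_Ico] at hi
        refine mul_le_mul (hb i) ?_ (by positivity) hC0
        exact pow_le_pow_of_le_one hx0.le hx1.le (by omega)
      calc ∑ i ∈ Finset.Ico 0 N, |v i - L| * x ^ (k + 1 - i)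
          ≤ ∑ _i ∈ Finset.Ico 0 N, C * x ^ (k + 1 - N) := Finset.sum_le_sum this
        _ = (N : ℝ) * (C * x ^ (k + 1 - N)) := by
            rw [Finset.sum_const, Nat.card_Ico, Nat.sub_zero, nsmul_eq_mul]
    have hxk : x ^ (k + 1 - N) ≤ ε2 := by
      have := hK (k + 1 - N) (by omega)
      rw [Real.dist_eq, sub_zero, abs_of_pos (pow_pos hx0 _)] at this
      linarith
    have hp1 : ∑ i ∈ Finset.Ico 0 N, |v i - L| * x ^ (k + 1 - i) < ε / 2 := by
      have h1 : (N : ℝ) * (C * x ^ (k + 1 - N)) ≤ (N : ℝ) * C * ε2 := by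
        rw [← mul_assoc]
        exact mul_le_mul_of_nonneg_left hxk (by positivity)
      have h2 : (N : ℝ) * C * ε2 < ((N : ℝ) * C + 1) * ε2 := by nlinarith
      have h3 : ((N : ℝ) * C + 1) * ε2 = ε / 2 := by
        rw [hε2def]; field_simp
      linarith [hpart1]
    have hp2 : ∑ i ∈ Finset.Ico N (k + 1), |v i - L| * x ^ (k + 1 - i) ≤ ε / 2 := by
      have hstep : ∀ i ∈ Finset.Ico N (k + 1), |v i - L| * x ^ (k + 1 - i)
          ≤ δ * x ^ (k + 1 - i) := by
        intro i hi
        simp only [Finset.mem_Ico] at hi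
        have := hN i hi.1
        rw [Real.dist_eq] at this
        exact mul_le_mul_of_nonneg_right this.le (by positivity)
      have hsum2 : ∑ i ∈ Finset.Ico N (k + 1), x ^ (k + 1 - i) ≤ x * (1 - x)⁻¹ := by
        rw [Finset.sum_Ico_eq_sum_range]
        have heq : ∀ i ∈ Finset.range (k + 1 - N), x ^ (k + 1 - (N + i))
            = (fun t => x ^ (t + 1)) (k + 1 - N - 1 - i) := by
          intro i hi
          simp only [Finset.mem_range] at hi
          simp only
          congr 1
          omega
        rw [Finset.sum_congr rfl heq, Finset.sum_range_reflect (fun t => x ^ (t + 1))]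
        exact hsum_pow _
      calc ∑ i ∈ Finset.Ico N (k + 1), |v i - L| * x ^ (k + 1 - i)
          ≤ ∑ i ∈ Finset.Ico N (k + 1), δ * x ^ (k + 1 - i) := Finset.sum_le_sum hstep
        _ = δ * ∑ i ∈ Finset.Ico N (k + 1), x ^ (k + 1 - i) := by rw [Finset.mul_sum]
        _ ≤ δ * (x * (1 - x)⁻¹) := mul_le_mul_of_nonneg_left hsum2 hδ.le
        _ = ε / 2 := by rw [hδdef]; field_simp
    calc |∑ i ∈ Finset.range (k + 1), (v i - L) * x ^ (k + 1 - i)|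
        ≤ ∑ i ∈ Finset.range (k + 1), |v i - L| * x ^ (k + 1 - i) := habs
      _ = _ + _ := hsplit2
      _ < ε / 2 + ε / 2 := by linarith [hp1, hp2]
      _ = ε := by ring
  have := hgeo.add hzero
  rw [add_zero] at this
  exact this.congr fun k => (hsplit k).symm

set_option maxHeartbeats 1000000 in
/-- Asymptotics of the growth function of the 2-valued coset group of
`ℤ/m * ℤ/m` for `m ≥ 3`: with `r > 1` the real root of
`λ^(m-1) - λ^(m-2) - ⋯ - λ - 1`, with `S i` the number of compositions of `i`
into parts from `{1, …, m-1}` and `ξ k = ∑_{i=0}^{k} S i`, one has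
`ξ k ∼ r^(k+1) / (m r - 2 (m - 1))` as `k → ∞`. -/
theorem growth_Zm_Zm_asymptotics (m : ℕ) (hm : 3 ≤ m) (r : ℝ) (hr : 1 < r)
    (hroot : r ^ (m - 1) - ∑ i ∈ Finset.range (m - 1), r ^ i = 0)
    (S : ℕ → ℕ)
    (hS : ∀ i : ℕ, S i = Nat.card {l : List ℕ // (∀ x ∈ l, 1 ≤ x ∧ x ≤ m - 1) ∧ l.sum = i})
    (ξ : ℕ → ℕ) (hξ : ∀ k : ℕ, ξ k = ∑ i ∈ Finset.range (k + 1), S i) :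
    Filter.Tendsto
      (fun k : ℕ => (ξ k : ℝ) * ((m : ℝ) * r - 2 * ((m : ℝ) - 1)) / r ^ (k + 1))
      Filter.atTop (nhds 1) := by
  have he : 2 ≤ m - 1 := by omega
  have hr0 : (0:ℝ) < r := by linarith
  have hx0 : (0:ℝ) < r⁻¹ := by positivity
  have hx1 : r⁻¹ < 1 := by
    rw [inv_lt_one_iff₀]; right; exact hr
  obtain ⟨hS0, hSrec⟩ := S_rec m hm S hS
  set v : ℕ → ℝ := fun i => (S i : ℝ) * r⁻¹ ^ i with hv_def
  have hpsum : ∑ j ∈ Finset.range (m - 1), r⁻¹ ^ (j + 1) = 1 := A1 m hm r hr hroot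
  have hv0 : v 0 = 1 := by simp [hv_def, hS0]
  have hvrec : ∀ n, v (n + 1) = ∑ j ∈ Finset.range (m - 1), r⁻¹ ^ (j + 1) * Wnd v n j := by
    intro n
    have hcast : (S (n + 1) : ℝ)
        = ∑ j ∈ Finset.range (m - 1), (if j ≤ n then (S (n - j) : ℝ) else 0) := by
      rw [hSrec n]
      push_cast
      exact Finset.sum_congr rfl fun j _ => by split <;> simp
    show (S (n + 1) : ℝ) * r⁻¹ ^ (n + 1) = _
    rw [hcast, Finset.sum_mul]
    refine Finset.sum_congr rfl fun j hj => ?_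
    simp only [Wnd, hv_def, ite_mul, zero_mul, mul_ite, mul_zero]
    split
    · next hjn =>
      have hxp : r⁻¹ ^ (j + 1) * r⁻¹ ^ (n - j) = r⁻¹ ^ (n + 1) := by
        rw [← pow_add]; congr 1; omega
      rw [← hxp]; ring
    · rfl
  obtain ⟨L, hvt, hvb⟩ := window_main (m - 1) he r⁻¹ hx0 hx1 v hpsum hvrec
  have hμL := conserved (m - 1) he r⁻¹ v hpsum hvrec hv0 L hvt
  have hA4 := A4 m hm r hr hroot
  have hr1 : r - 1 ≠ 0 := by linarith
  have hfin := (sum_geom_weight r⁻¹ hx0 hx1 v L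
      (bb (m - 1) he v 0 - aa (m - 1) he v 0) hvb hvt).mul_const
    ((∑ j ∈ Finset.range (m - 1), ∑ l ∈ Finset.Icc (j + 1) (m - 1), r⁻¹ ^ l) * (r - 1))
  have hval : L * (r⁻¹ / (1 - r⁻¹))
      * ((∑ j ∈ Finset.range (m - 1), ∑ l ∈ Finset.Icc (j + 1) (m - 1), r⁻¹ ^ l) * (r - 1))
      = 1 := by
    have hb1 : (1:ℝ) - r⁻¹ ≠ 0 := ne_of_gt (by linarith)
    have h1 : r⁻¹ / (1 - r⁻¹) = (r - 1)⁻¹ := by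
      rw [inv_eq_one_div (r - 1), div_eq_div_iff hb1 hr1]
      have hinv : r⁻¹ * r = 1 := inv_mul_cancel₀ (ne_of_gt hr0)
      linear_combination hinv
    rw [h1]
    calc L * (r - 1)⁻¹
        * ((∑ j ∈ Finset.range (m - 1), ∑ l ∈ Finset.Icc (j + 1) (m - 1), r⁻¹ ^ l) * (r - 1))
        = ((∑ j ∈ Finset.range (m - 1), ∑ l ∈ Finset.Icc (j + 1) (m - 1), r⁻¹ ^ l) * L)
          * ((r - 1) * (r - 1)⁻¹) := by ring
      _ = 1 := by rw [mul_inv_cancel₀ hr1, hμL, mul_one]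
  have heq : ∀ k : ℕ, (∑ i ∈ Finset.range (k + 1), v i * r⁻¹ ^ (k + 1 - i))
      * ((∑ j ∈ Finset.range (m - 1), ∑ l ∈ Finset.Icc (j + 1) (m - 1), r⁻¹ ^ l) * (r - 1))
      = (ξ k : ℝ) * ((m : ℝ) * r - 2 * ((m : ℝ) - 1)) / r ^ (k + 1) := by
    intro k
    have hsum : ∑ i ∈ Finset.range (k + 1), v i * r⁻¹ ^ (k + 1 - i)
        = (ξ k : ℝ) * r⁻¹ ^ (k + 1) := by
      rw [hξ k]
      push_cast
      rw [Finset.sum_mul]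
      refine Finset.sum_congr rfl fun i hi => ?_
      simp only [Finset.mem_range] at hi
      have hxp : r⁻¹ ^ i * r⁻¹ ^ (k + 1 - i) = r⁻¹ ^ (k + 1) := by
        rw [← pow_add]; congr 1; omega
      simp only [hv_def]
      rw [mul_assoc, hxp]
    rw [hsum, ← hA4, div_eq_mul_inv, ← inv_pow]
    ring
  have hfin2 := hfin.congr heq
  rwa [hval] at hfin2
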